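/- Let (X, 𝒜, μ) be a measure space, V = L²(μ; ℝ³), T : V → V a symmetric linear map (⟨T x, y⟩ = ⟨x, T y⟩ for all x, y ∈ V), and Q : V → V an orthogonal projection (Q ∘ Q = Q and ⟨Q f, g⟩ = ⟨f, Q g⟩ for all f, g ∈ V). Let A₀, A₁, u ∈ V, Δt ∈ ℝ, set B₀ = T A₀, B₁ = T A₁, H = Q((B₀ + B₁)/2), and suppose there is w ∈ V whose representative equals the pointwise cross product u(x) × H(x) for μ-a.e. x, and that A₁ − A₀ = Δt · Q w. Then the discrete helicity is conserved: ⟨A₁, B₁⟩ = ⟨A₀, B₀⟩. (This is the helicity conservation mechanism of the projection-based scheme in Theorem 4.1: the update A₁ − A₀ = −Δt E with E = −Q(u × H) and H the projection of the midpoint magnetic field leaves ⟨A, B⟩ invariant.) -/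

import Mathlib

open MeasureTheory

/-- The standard cross product on `ℝ³ = EuclideanSpace ℝ (Fin 3)`. -/
noncomputable def cross3 (a b : EuclideanSpace ℝ (Fin 3)) : EuclideanSpace ℝ (Fin 3) :=
  WithLp.toLp 2 (crossProduct a b)

/-- Helicity conservation mechanism of the projection-based scheme (Theorem 4.1):
with `T` symmetric, `Q` an orthogonal projection, `B₀ = T A₀`, `B₁ = T A₁`,
`H = Q((B₀ + B₁)/2)`, and the update `A₁ − A₀ = Δt • Q w` where `w` has a.e.
representative `u × H`, the discrete helicity `⟨A, B⟩` is conserved. -/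
theorem projection_scheme_helicity_conservation
    {X : Type*} [MeasurableSpace X] (μ : Measure X)
    (T Q : Lp (EuclideanSpace ℝ (Fin 3)) 2 μ →ₗ[ℝ] Lp (EuclideanSpace ℝ (Fin 3)) 2 μ)
    (hT : ∀ x y, inner (𝕜 := ℝ) (T x) y = inner (𝕜 := ℝ) x (T y))
    (hQproj : Q ∘ₗ Q = Q)
    (hQsym : ∀ f g, inner (𝕜 := ℝ) (Q f) g = inner (𝕜 := ℝ) f (Q g))
    (A₀ A₁ u B₀ B₁ H w : Lp (EuclideanSpace ℝ (Fin 3)) 2 μ) (Δt : ℝ)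
    (hB₀ : B₀ = T A₀) (hB₁ : B₁ = T A₁)
    (hH : H = Q ((2:ℝ)⁻¹ • (B₀ + B₁)))
    (hw : ∀ᵐ x ∂μ, w x = cross3 (u x) (H x))
    (hupd : A₁ - A₀ = Δt • Q w) :
    inner (𝕜 := ℝ) A₁ B₁ = inner (𝕜 := ℝ) A₀ B₀ := by
  -- pointwise orthogonality of cross product
  have hcross : ∀ a b : EuclideanSpace ℝ (Fin 3), inner (𝕜 := ℝ) (cross3 a b) b = 0 := by
    intro a b
    simp only [cross3, WithLp.ofLp_toLp, crossProduct, PiLp.inner_apply, RCLike.inner_apply, starRingEnd_apply,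
      star_trivial, Fin.sum_univ_three, LinearMap.mk₂_apply, Matrix.cons_val_zero,
      Matrix.cons_val_one, Matrix.head_cons, Matrix.cons_val_two, Matrix.tail_cons]
    ring
  have hwH : inner (𝕜 := ℝ) w H = 0 := by
    rw [MeasureTheory.L2.inner_def]
    rw [show (0:ℝ) = ∫ x, (0:ℝ) ∂μ by simp]
    refine integral_congr_ae ?_
    filter_upwards [hw] with x hx
    rw [hx]
    exact hcross (u x) (H x)
  have h2H : Q (B₀ + B₁) = (2:ℝ) • H := by
    rw [hH, LinearMap.map_smul, smul_smul]
    norm_num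
  have hsym : inner (𝕜 := ℝ) A₁ B₀ = inner (𝕜 := ℝ) A₀ B₁ := by
    rw [hB₀, hB₁, real_inner_comm, hT, real_inner_comm]
  have key : inner (𝕜 := ℝ) (A₁ - A₀) (B₀ + B₁) = 0 := by
    rw [hupd, real_inner_smul_left, hQsym, h2H, real_inner_smul_right, hwH]
    ring
  have expand : inner (𝕜 := ℝ) (A₁ - A₀) (B₀ + B₁)
      = inner (𝕜 := ℝ) A₁ B₁ - inner (𝕜 := ℝ) A₀ B₀
        + (inner (𝕜 := ℝ) A₁ B₀ - inner (𝕜 := ℝ) A₀ B₁) := by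
    rw [inner_sub_left, inner_add_right, inner_add_right]
    ring
  rw [expand, hsym] at key
  linarith
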